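/- Let 0<γ<1, a≥0 real, let 0 = t₀ < t₁ < ⋯ < t_n be an arbitrary mesh with τ_j = t_{j+1} − t_j, and define Q̃_j = (1/(Γ(1−γ)·τ_{n−1−j})) ∫_{t_{n−1−j}}^{t_{n−j}} (t_n − s)^{−γ} ds for j = 0,…,n−1, with Q̃_{−1}:=0. For reals V₀,…,V_n define L̃ V_n = Σ_{l=0}^{n−1} e^{a(t_{n−l}−t_n)} (Q̃_l − Q̃_{l−1}) V_{n−l} − e^{−a t_n} Q̃_{n−1} V₀. Then V_n · L̃ V_n ≥ (Q̃₀/2 + Q̃_{n−1}/4)·V_n² + (1/2) Σ_{l=1}^{n−1} e^{2a(t_{n−l}−t_n)} (Q̃_l − Q̃_{l−1}) V_{n−l}² − e^{−2a t_n} Q̃_{n−1} V₀². -/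

import Mathlib

open Real MeasureTheory intervalIntegral Finset

/-- PI quadrature coefficients of the Caputo fractional substantial derivative of order
`γ` on the non-uniform mesh `0 = t₀ < t₁ < ⋯ < t_n`:
`Q̃_j = (1/(Γ(1−γ)·τ_{n−1−j})) ∫_{t_{n−1−j}}^{t_{n−j}} (t_n − s)^{−γ} ds`,
where `τ_j = t_{j+1} − t_j`. -/
noncomputable def Qtil (γ : ℝ) (n : ℕ) (t : ℕ → ℝ) (j : ℕ) : ℝ :=
  (1 / (Real.Gamma (1 - γ) * (t (n - j) - t (n - 1 - j)))) *
    ∫ s in (t (n - 1 - j))..(t (n - j)), (t n - s) ^ (-γ)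

/-- discrete coercivity of the non-uniform PI discretization of the
Caputo fractional substantial derivative, with tempering weights `e^{a(t_{n−l}−t_n)}`,
`a ≥ 0`, and the convention `Q̃_{−1} = 0` (encoded by the `if l = 0` clause). -/
theorem pi_nonuniform_coercivity
    (γ a : ℝ) (hγ0 : 0 < γ) (hγ1 : γ < 1) (ha : 0 ≤ a)
    (n : ℕ) (hn : 1 ≤ n)
    (t : ℕ → ℝ) (ht0 : t 0 = 0) (hmono : ∀ j < n, t j < t (j + 1))
    (V : ℕ → ℝ) :
    V n * ((∑ l ∈ Finset.range n,
          Real.exp (a * (t (n - l) - t n)) *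
            (Qtil γ n t l - if l = 0 then 0 else Qtil γ n t (l - 1)) * V (n - l))
        - Real.exp (-(a * t n)) * Qtil γ n t (n - 1) * V 0)
    ≥ (Qtil γ n t 0 / 2 + Qtil γ n t (n - 1) / 4) * (V n) ^ 2
      + (1 / 2) * (∑ l ∈ Finset.Ico 1 n,
          Real.exp (2 * a * (t (n - l) - t n)) *
            (Qtil γ n t l - Qtil γ n t (l - 1)) * (V (n - l)) ^ 2)
      - Real.exp (-(2 * a * t n)) * Qtil γ n t (n - 1) * (V 0) ^ 2 := by
  have hΓ : 0 < Real.Gamma (1 - γ) := Real.Gamma_pos_of_pos (by linarith)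
  set p : ℝ := 1 - γ with hpdef
  have hp0 : 0 < p := by simp only [hpdef]; linarith
  have hp1 : p ≤ 1 := by simp only [hpdef]; linarith
  -- strict monotonicity of the mesh up to n
  have tmono : ∀ i j : ℕ, i < j → j ≤ n → t i < t j := by
    intro i j hij hjn
    induction j with
    | zero => omega
    | succ k ih =>
      rcases Nat.lt_succ_iff_lt_or_eq.mp hij with h | h
      · exact (ih h (by omega)).trans (hmono k (by omega))
      · subst h; exact hmono i (by omega)
  have tmono' : ∀ i j : ℕ, i ≤ j → j ≤ n → t i ≤ t j := by
    intro i j hij hjn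
    rcases Nat.lt_or_ge i j with h | h
    · exact (tmono i j h hjn).le
    · have : i = j := le_antisymm hij h
      simp [this]
  set T : ℝ := t n with hT
  set F : ℝ → ℝ := fun x => (1 / (p * Real.Gamma (1 - γ))) * (-(T - x) ^ p) with hF
  -- the quadrature coefficient is a difference quotient of F
  have hQeq : ∀ j, j < n →
      Qtil γ n t j = (F (t (n - j)) - F (t (n - 1 - j))) / (t (n - j) - t (n - 1 - j)) := by
    intro j hj
    have hAB : t (n - 1 - j) < t (n - j) := tmono _ _ (by omega) (by omega)
    have hBT : t (n - j) ≤ T := tmono' _ _ (by omega) le_rfl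
    have hint : (∫ s in (t (n - 1 - j))..(t (n - j)), (T - s) ^ (-γ))
        = ((T - t (n - 1 - j)) ^ p - (T - t (n - j)) ^ p) / p := by
      rw [intervalIntegral.integral_comp_sub_left (fun u => u ^ (-γ)) T]
      rw [integral_rpow (Or.inl (by linarith))]
      have : -γ + 1 = p := by simp [hpdef]; ring
      rw [this]
    rw [Qtil, hint]
    have hτ : t (n - j) - t (n - 1 - j) ≠ 0 := by linarith
    simp only [hF]
    field_simp
    ring
  -- convexity of F on Iic T
  have hconc : ConcaveOn ℝ (Set.Iic T) (fun x => (T - x) ^ p) := by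
    refine ⟨convex_Iic T, fun x hx y hy b c hb hc hbc => ?_⟩
    have hx' : (0:ℝ) ≤ T - x := by simpa [sub_nonneg] using hx
    have hy' : (0:ℝ) ≤ T - y := by simpa [sub_nonneg] using hy
    have key := (Real.concaveOn_rpow hp0.le hp1).2 (Set.mem_Ici.mpr hx')
      (Set.mem_Ici.mpr hy') hb hc hbc
    simp only [smul_eq_mul] at key ⊢
    have h1 : T - (b * x + c * y) = b * (T - x) + c * (T - y) := by
      linear_combination T * hbc.symm
    rw [h1]
    exact key
  have hconv : ConvexOn ℝ (Set.Iic T) F := by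
    have hc0 : (0:ℝ) ≤ 1 / (p * Real.Gamma (1 - γ)) := by positivity
    have h := (hconc.neg).smul hc0
    have he : (fun x => (1 / (p * Real.Gamma (1 - γ))) • (-(fun x => (T - x) ^ p)) x) = F := by
      funext x
      simp [hF, smul_eq_mul]
    rwa [he] at h
  -- nonnegativity
  have hQnn : ∀ j, j < n → 0 ≤ Qtil γ n t j := by
    intro j hj
    rw [hQeq j hj]
    have hAB : t (n - 1 - j) < t (n - j) := tmono _ _ (by omega) (by omega)
    have hBT : t (n - j) ≤ T := tmono' _ _ (by omega) le_rfl
    have hrp : (T - t (n - j)) ^ p ≤ (T - t (n - 1 - j)) ^ p :=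
      Real.rpow_le_rpow (by linarith) (by linarith) hp0.le
    have hc0 : (0:ℝ) < 1 / (p * Real.Gamma (1 - γ)) := by positivity
    have hFF : F (t (n - 1 - j)) ≤ F (t (n - j)) := by
      simp only [hF]
      nlinarith
    exact div_nonneg (by linarith) (by linarith)
  -- monotonicity: Qtil l ≤ Qtil (l-1) for 1 ≤ l < n
  have hQmono : ∀ l, 1 ≤ l → l < n → Qtil γ n t l ≤ Qtil γ n t (l - 1) := by
    intro l hl1 hln
    have e1 : n - 1 - (l - 1) = n - l := by omega
    have e2 : n - (l - 1) = n - l + 1 := by omega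
    rw [hQeq l hln, hQeq (l - 1) (by omega), e1, e2]
    have hx : t (n - 1 - l) ∈ Set.Iic T := Set.mem_Iic.mpr (tmono' _ _ (by omega) le_rfl)
    have hz : t (n - l + 1) ∈ Set.Iic T := Set.mem_Iic.mpr (tmono' _ _ (by omega) le_rfl)
    exact hconv.slope_mono_adjacent hx hz (tmono _ _ (by omega) (by omega))
      (tmono _ _ (by omega) (by omega))
  -- telescoping sum
  have htel : ∑ l ∈ Finset.Ico 1 n, (Qtil γ n t l - Qtil γ n t (l - 1))
      = Qtil γ n t (n - 1) - Qtil γ n t 0 := by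
    rw [Finset.sum_Ico_eq_sum_range]
    have hc : ∀ i ∈ Finset.range (n - 1),
        Qtil γ n t (1 + i) - Qtil γ n t (1 + i - 1)
          = Qtil γ n t (i + 1) - Qtil γ n t i := by
      intro i _
      congr 2 <;> omega
    rw [Finset.sum_congr rfl hc, Finset.sum_range_sub (fun i => Qtil γ n t i)]
  -- split off the l = 0 term of the main sum
  have hsum : (∑ l ∈ Finset.range n,
        Real.exp (a * (t (n - l) - T)) *
          (Qtil γ n t l - if l = 0 then 0 else Qtil γ n t (l - 1)) * V (n - l))
      = Qtil γ n t 0 * V n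
        + ∑ l ∈ Finset.Ico 1 n,
            Real.exp (a * (t (n - l) - T)) * (Qtil γ n t l - Qtil γ n t (l - 1)) * V (n - l) := by
    rw [Finset.range_eq_Ico, Finset.sum_eq_sum_Ico_succ_bot (by omega : 0 < n)]
    congr 1
    · simp [hT]
    · refine Finset.sum_congr rfl fun l hl => ?_
      have : l ≠ 0 := by
        simp only [Finset.mem_Ico] at hl; omega
      simp [this]
  -- termwise Young inequality on the sum
  have hterm : ∀ l ∈ Finset.Ico 1 n,
      (Qtil γ n t l - Qtil γ n t (l - 1)) / 2 * (V n) ^ 2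
        + 1 / 2 * (Real.exp (2 * a * (t (n - l) - T)) *
            (Qtil γ n t l - Qtil γ n t (l - 1)) * (V (n - l)) ^ 2)
      ≤ V n * (Real.exp (a * (t (n - l) - T)) *
          (Qtil γ n t l - Qtil γ n t (l - 1)) * V (n - l)) := by
    intro l hl
    simp only [Finset.mem_Ico] at hl
    have hd : Qtil γ n t l - Qtil γ n t (l - 1) ≤ 0 :=
      sub_nonpos.mpr (hQmono l hl.1 hl.2)
    have h2 : Real.exp (2 * a * (t (n - l) - T))
        = Real.exp (a * (t (n - l) - T)) * Real.exp (a * (t (n - l) - T)) := by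
      rw [← Real.exp_add]; ring_nf
    rw [h2]
    set w := Real.exp (a * (t (n - l) - T)) with hw
    set d := Qtil γ n t l - Qtil γ n t (l - 1) with hdd
    have key : 0 ≤ (-d / 2) * (V n - w * V (n - l)) ^ 2 :=
      mul_nonneg (by linarith) (sq_nonneg _)
    have expand : (-d / 2) * (V n - w * V (n - l)) ^ 2
        = V n * (w * d * V (n - l))
          - (d / 2 * (V n) ^ 2 + 1 / 2 * (w * w * d * (V (n - l)) ^ 2)) := by
      ring
    rw [expand] at key
    linarith
  set S2 := ∑ l ∈ Finset.Ico 1 n,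
      Real.exp (2 * a * (t (n - l) - T)) *
        (Qtil γ n t l - Qtil γ n t (l - 1)) * (V (n - l)) ^ 2 with hS2
  have hsum2 : (Qtil γ n t (n - 1) - Qtil γ n t 0) / 2 * (V n) ^ 2 + 1 / 2 * S2
      ≤ ∑ l ∈ Finset.Ico 1 n, V n * (Real.exp (a * (t (n - l) - T)) *
          (Qtil γ n t l - Qtil γ n t (l - 1)) * V (n - l)) := by
    have e : ∑ l ∈ Finset.Ico 1 n,
        ((Qtil γ n t l - Qtil γ n t (l - 1)) / 2 * (V n) ^ 2
          + 1 / 2 * (Real.exp (2 * a * (t (n - l) - T)) *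
              (Qtil γ n t l - Qtil γ n t (l - 1)) * (V (n - l)) ^ 2))
        = (Qtil γ n t (n - 1) - Qtil γ n t 0) / 2 * (V n) ^ 2 + 1 / 2 * S2 := by
      rw [Finset.sum_add_distrib, ← Finset.sum_mul, ← Finset.sum_div, htel, ← Finset.mul_sum]
    rw [← e]
    exact Finset.sum_le_sum hterm
  -- Young inequality for the initial-value term
  have hnn : 0 ≤ Qtil γ n t (n - 1) := hQnn (n - 1) (by omega)
  have hE2 : Real.exp (-(2 * a * T)) = Real.exp (-(a * T)) * Real.exp (-(a * T)) := by
    rw [← Real.exp_add]; ring_nf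
  have hY : V n * (Real.exp (-(a * T)) * Qtil γ n t (n - 1) * V 0)
      ≤ Qtil γ n t (n - 1) / 4 * (V n) ^ 2
        + Real.exp (-(2 * a * T)) * Qtil γ n t (n - 1) * (V 0) ^ 2 := by
    rw [hE2]
    set E := Real.exp (-(a * T)) with hE
    have key : 0 ≤ Qtil γ n t (n - 1) * (V n / 2 - E * V 0) ^ 2 :=
      mul_nonneg hnn (sq_nonneg _)
    have expand : Qtil γ n t (n - 1) * (V n / 2 - E * V 0) ^ 2
        = Qtil γ n t (n - 1) / 4 * (V n) ^ 2 + E * E * Qtil γ n t (n - 1) * (V 0) ^ 2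
          - V n * (E * Qtil γ n t (n - 1) * V 0) := by
      ring
    rw [expand] at key
    linarith
  -- assemble
  rw [hsum, mul_sub, mul_add, Finset.mul_sum]
  linarith [hsum2, hY]
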